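/- For n = 8, the subgroup Γ₀ of Γ = O⁺(ℤ^{8,1}) generated by the reflections s_{α₀}, s_{α₁}, …, s_{α₇} in the long simple roots α₀ = e₀ − e₁ − e₂ − e₃ and α_i = e_i − e_{i+1} for 1 ≤ i ≤ 7 intersects the principal congruence subgroup Γ(2) in a subgroup of order exactly 2. -/

import Mathlib

open scoped BigOperators

/-- The lattice `ℤ^{n,1}`: `ℤ^{n+1}` as an abelian group. -/
abbrev LVec (n : ℕ) : Type := Fin (n + 1) → ℤ

/-- The standard basis vectors `e₀, …, eₙ` of `ℤ^{n,1}`. -/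
def evec {n : ℕ} (i : Fin (n + 1)) : LVec n := Pi.single i 1

/-- The Lorentzian bilinear form `⟨x,y⟩ = -x₀y₀ + x₁y₁ + ⋯ + xₙyₙ` on `ℤ^{n,1}`. -/
def B {n : ℕ} (x y : LVec n) : ℤ :=
  ∑ i : Fin (n + 1), (if i = 0 then -1 else 1) * x i * y i

lemma B_comm {n : ℕ} (x y : LVec n) : B x y = B y x := by
  unfold B; exact Finset.sum_congr rfl fun i _ => by ring

lemma B_add_left {n : ℕ} (x y z : LVec n) : B (x + y) z = B x z + B y z := by
  unfold B
  rw [← Finset.sum_add_distrib]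
  exact Finset.sum_congr rfl fun i _ => by by_cases h : i = 0 <;> simp [h, Pi.add_apply] <;> ring

lemma B_smul_left {n : ℕ} (c : ℤ) (x z : LVec n) : B (c • x) z = c * B x z := by
  unfold B
  rw [Finset.mul_sum]
  exact Finset.sum_congr rfl fun i _ => by by_cases h : i = 0 <;> simp [h, Pi.smul_apply] <;> ring

lemma B_neg_left {n : ℕ} (x z : LVec n) : B (-x) z = -B x z := by
  have := B_smul_left (n := n) (-1) x z
  simpa using this

lemma B_sub_left {n : ℕ} (x y z : LVec n) : B (x - y) z = B x z - B y z := by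
  rw [sub_eq_add_neg, B_add_left, B_neg_left, sub_eq_add_neg]

lemma B_add_right {n : ℕ} (x y z : LVec n) : B x (y + z) = B x y + B x z := by
  rw [B_comm, B_add_left, B_comm y x, B_comm z x]

lemma B_smul_right {n : ℕ} (c : ℤ) (x z : LVec n) : B x (c • z) = c * B x z := by
  rw [B_comm, B_smul_left, B_comm]

lemma B_sub_right {n : ℕ} (x y z : LVec n) : B x (y - z) = B x y - B x z := by
  rw [B_comm, B_sub_left, B_comm y x, B_comm z x]

lemma B_eq {n : ℕ} (x y : LVec n) :
    B x y = -(x 0 * y 0) + ∑ i ∈ Finset.univ.erase 0, x i * y i := by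
  unfold B
  rw [← Finset.add_sum_erase _ _ (Finset.mem_univ (0 : Fin (n + 1)))]
  congr 1
  · simp
  · exact Finset.sum_congr rfl fun i hi => by
      rw [if_neg (Finset.ne_of_mem_erase hi), one_mul]

lemma B_evec_zero_right {n : ℕ} (x : LVec n) : B x (evec 0) = -(x 0) := by
  rw [B_eq]
  have h1 : ∑ i ∈ Finset.univ.erase (0 : Fin (n+1)), x i * evec 0 i = 0 := by
    apply Finset.sum_eq_zero
    intro i hi
    have : evec (0 : Fin (n+1)) i = 0 := Pi.single_eq_of_ne (Finset.ne_of_mem_erase hi) 1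
    rw [this, mul_zero]
  rw [h1]
  simp [evec, Pi.single_eq_same]

lemma B_evec_zero_self {n : ℕ} : B (evec (0 : Fin (n+1))) (evec 0) = -1 := by
  rw [B_evec_zero_right]
  simp [evec, Pi.single_eq_same]

/-- Cauchy-Schwarz consequence: two forward vectors of norm `-1` have negative inner product. -/
lemma B_neg_of_forward {n : ℕ} (x y : LVec n) (hx : B x x = -1) (hy : B y y = -1)
    (hx0 : 0 < x 0) (hy0 : 0 < y 0) : B x y < 0 := by
  have hx' := B_eq x x
  have hy' := B_eq y y
  have hxy := B_eq x y
  set Sx := ∑ i ∈ Finset.univ.erase (0 : Fin (n+1)), x i * x i with hSx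
  set Sy := ∑ i ∈ Finset.univ.erase (0 : Fin (n+1)), y i * y i with hSy
  set S := ∑ i ∈ Finset.univ.erase (0 : Fin (n+1)), x i * y i with hS
  have hCS : S ^ 2 ≤ Sx * Sy := by
    have := Finset.sum_mul_sq_le_sq_mul_sq (Finset.univ.erase (0 : Fin (n+1))) x y
    simpa [hSx, hSy, hS, sq] using this
  have hSx' : Sx = x 0 * x 0 - 1 := by linarith
  have hSy' : Sy = y 0 * y 0 - 1 := by linarith
  have hbound : S ^ 2 < (x 0 * y 0) ^ 2 := by
    rw [hSx', hSy'] at hCS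
    nlinarith
  have hpos : 0 < x 0 * y 0 := mul_pos hx0 hy0
  have : S < x 0 * y 0 := by nlinarith
  rw [hxy]
  linarith

lemma forward_ne_zero {n : ℕ} (y : LVec n) (hy : B y y = -1) : y 0 ≠ 0 := by
  have hy' := B_eq y y
  have hnn : 0 ≤ ∑ i ∈ Finset.univ.erase (0 : Fin (n+1)), y i * y i :=
    Finset.sum_nonneg fun i _ => mul_self_nonneg _
  intro h0
  rw [h0] at hy'
  linarith

lemma forward_of_B_neg {n : ℕ} (x y : LVec n) (hx : B x x = -1) (hy : B y y = -1)
    (hx0 : 0 < x 0) (hxy : B x y < 0) : 0 < y 0 := by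
  rcases lt_trichotomy (y 0) 0 with h | h | h
  · exfalso
    have hny : B (-y) (-y) = -1 := by
      rw [B_neg_left, B_comm, B_neg_left, B_comm]; simpa using hy
    have hny0 : 0 < (-y) 0 := by simpa using h
    have := B_neg_of_forward x (-y) hx hny hx0 hny0
    rw [B_comm, B_neg_left, B_comm] at this
    linarith
  · exact absurd h (forward_ne_zero y hy)
  · exact h

/-- The group `Γ = O⁺(ℤ^{n,1})` of integral linear automorphisms preserving the
Lorentzian form and the forward cone. -/
def Gamma (n : ℕ) : Subgroup ((LVec n) ≃ₗ[ℤ] (LVec n)) where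
  carrier := { g | (∀ x y, B (g x) (g y) = B x y) ∧ B (g (evec 0)) (evec 0) < 0 }
  one_mem' := by
    refine ⟨fun x y => rfl, ?_⟩
    show B (evec 0) (evec 0) < 0
    rw [B_evec_zero_self]
    norm_num
  mul_mem' := by
    rintro a b ⟨ha1, ha2⟩ ⟨hb1, hb2⟩
    have hmul : ∀ v : LVec n, (a * b) v = a (b v) := fun v => rfl
    refine ⟨fun x y => by rw [hmul, hmul, ha1, hb1], ?_⟩
    rw [hmul]
    set v := b (evec 0) with hv
    have hvnorm : B v v = -1 := by rw [hb1]; exact B_evec_zero_self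
    have hv0 : 0 < v 0 := by
      rw [B_evec_zero_right] at hb2; omega
    have hae0 : B (a (evec 0)) (a (evec 0)) = -1 := by rw [ha1]; exact B_evec_zero_self
    have hae00 : 0 < (a (evec 0)) 0 := by
      rw [B_evec_zero_right] at ha2; omega
    have havnorm : B (a v) (a v) = -1 := by rw [ha1]; exact hvnorm
    have hinner : B (a (evec 0)) (a v) < 0 := by
      rw [ha1, B_comm, B_evec_zero_right]; omega
    have := forward_of_B_neg (a (evec 0)) (a v) hae0 havnorm hae00 hinner
    rw [B_evec_zero_right]; omega
  inv_mem' := by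
    rintro a ⟨ha1, ha2⟩
    have hinv : ∀ v : LVec n, a (a⁻¹ v) = v := fun v => a.apply_symm_apply v
    have hform : ∀ x y, B (a⁻¹ x) (a⁻¹ y) = B x y := by
      intro x y
      have := ha1 (a⁻¹ x) (a⁻¹ y)
      rw [hinv, hinv] at this
      exact this.symm
    refine ⟨hform, ?_⟩
    set w := a⁻¹ (evec 0) with hw
    have hwnorm : B w w = -1 := by rw [hform]; exact B_evec_zero_self
    have hinner : B (evec 0) w < 0 := by
      have h1 : B (a (evec 0)) (a w) = B (evec 0) w := ha1 (evec 0) w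
      have h2 : a w = evec 0 := hinv (evec 0)
      rw [h2] at h1
      rw [← h1]
      exact ha2
    have he0 : B (evec (0 : Fin (n+1))) (evec 0) = -1 := B_evec_zero_self
    have he00 : 0 < (evec (0 : Fin (n+1))) 0 := by simp [evec, Pi.single_eq_same]
    have := forward_of_B_neg (evec 0) w he0 hwnorm he00 hinner
    rw [B_evec_zero_right]; omega

/-- The principal congruence subgroup `Γ(m)` of `Γ = O⁺(ℤ^{n,1})`:
elements congruent to the identity modulo `m`. -/
def GammaCong (n m : ℕ) : Subgroup (Gamma n) where
  carrier := { g | ∀ (v : LVec n) (i : Fin (n + 1)),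
      (m : ℤ) ∣ ((g : (LVec n) ≃ₗ[ℤ] (LVec n)) v i - v i) }
  one_mem' := by intro v i; simp
  mul_mem' := by
    intro a b ha hb v i
    have : ((a * b : Gamma n) : (LVec n) ≃ₗ[ℤ] (LVec n)) v
        = (a : (LVec n) ≃ₗ[ℤ] (LVec n)) ((b : (LVec n) ≃ₗ[ℤ] (LVec n)) v) := rfl
    rw [this]
    have h1 := ha ((b : (LVec n) ≃ₗ[ℤ] (LVec n)) v) i
    have h2 := hb v i
    have heq : (a : (LVec n) ≃ₗ[ℤ] (LVec n)) ((b : (LVec n) ≃ₗ[ℤ] (LVec n)) v) i - v i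
        = ((a : (LVec n) ≃ₗ[ℤ] (LVec n)) ((b : (LVec n) ≃ₗ[ℤ] (LVec n)) v) i
            - (b : (LVec n) ≃ₗ[ℤ] (LVec n)) v i)
          + ((b : (LVec n) ≃ₗ[ℤ] (LVec n)) v i - v i) := by ring
    rw [heq]
    exact dvd_add h1 h2
  inv_mem' := by
    intro a ha v i
    set w := ((a⁻¹ : Gamma n) : (LVec n) ≃ₗ[ℤ] (LVec n)) v with hw
    have hww : (a : (LVec n) ≃ₗ[ℤ] (LVec n)) w = v := by
      rw [hw]
      exact (a : (LVec n) ≃ₗ[ℤ] (LVec n)).apply_symm_apply v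
    have := ha w i
    rw [hww] at this
    exact (dvd_sub_comm).mp this

instance GammaCong_normal (n m : ℕ) : (GammaCong n m).Normal := by
  constructor
  intro g hg h v i
  set hE := (h : (LVec n) ≃ₗ[ℤ] (LVec n)) with hhE
  set gE := (g : (LVec n) ≃ₗ[ℤ] (LVec n)) with hgE
  have happ : ((h * g * h⁻¹ : Gamma n) : (LVec n) ≃ₗ[ℤ] (LVec n)) v
      = hE (gE (hE.symm v)) := rfl
  rw [happ]
  set w := hE.symm v with hwdef
  have hv : hE w = v := hE.apply_symm_apply v
  obtain ⟨u, hu⟩ : ∃ u : LVec n, gE w - w = (m : ℤ) • u := by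
    refine ⟨fun j => (gE w j - w j) / m, ?_⟩
    funext j
    have hj := hg w j
    simp only [Pi.sub_apply, Pi.smul_apply, smul_eq_mul]
    exact (Int.mul_ediv_cancel' hj).symm
  have key : hE (gE w) - v = (m : ℤ) • hE u := by
    rw [← hv, ← map_sub, hu, map_smul]
  have hcomp : hE (gE w) i - v i = (m : ℤ) * (hE u i) := by
    have := congrFun key i
    simpa using this
  rw [hcomp]
  exact dvd_mul_right _ _

/-- The reflection `s_α(v) = v - 2⟨v,α⟩α` in a norm one root `α`, as a linear map. -/
def reflMap {n : ℕ} (α : LVec n) : LVec n →ₗ[ℤ] LVec n where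
  toFun v := v - (2 * B v α) • α
  map_add' x y := by
    show (x + y) - (2 * B (x + y) α) • α
        = (x - (2 * B x α) • α) + (y - (2 * B y α) • α)
    rw [B_add_left, mul_add, add_smul]
    abel
  map_smul' c x := by
    show (c • x) - (2 * B (c • x) α) • α = c • (x - (2 * B x α) • α)
    rw [B_smul_left, smul_sub, smul_smul,
      show (2 : ℤ) * (c * B x α) = c * (2 * B x α) by ring]

lemma reflMap_apply {n : ℕ} (α : LVec n) (v : LVec n) :
    reflMap α v = v - (2 * B v α) • α := rfl

lemma reflMap_invol {n : ℕ} (α : LVec n) (hα : B α α = 1) (v : LVec n) :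
    reflMap α (reflMap α v) = v := by
  rw [reflMap_apply, reflMap_apply, B_sub_left, B_smul_left, hα, mul_one,
    show 2 * (B v α - 2 * B v α) = -(2 * B v α) by ring, neg_smul]
  abel

/-- The reflection in a norm one root, as a linear automorphism. -/
def srefl {n : ℕ} (α : LVec n) (hα : B α α = 1) : (LVec n) ≃ₗ[ℤ] (LVec n) :=
  LinearEquiv.ofLinear (reflMap α) (reflMap α)
    (LinearMap.ext fun v => reflMap_invol α hα v)
    (LinearMap.ext fun v => reflMap_invol α hα v)

lemma srefl_apply {n : ℕ} (α : LVec n) (hα : B α α = 1) (v : LVec n) :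
    srefl α hα v = v - (2 * B v α) • α := rfl

lemma srefl_form {n : ℕ} (α : LVec n) (hα : B α α = 1) (x y : LVec n) :
    B (srefl α hα x) (srefl α hα y) = B x y := by
  rw [srefl_apply, srefl_apply, B_sub_left, B_sub_right, B_sub_right,
    B_smul_left, B_smul_right, B_smul_right, B_smul_left, hα, B_comm y α]
  ring

lemma srefl_mem {n : ℕ} (α : LVec n) (hα : B α α = 1) : srefl α hα ∈ Gamma n := by
  refine ⟨srefl_form α hα, ?_⟩
  rw [srefl_apply, B_sub_left, B_smul_left, B_evec_zero_self, B_comm]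
  nlinarith [sq_nonneg (B α (evec (0 : Fin (n+1))))]

/-- The reflection in a norm one root, as an element of `Γ = O⁺(ℤ^{n,1})`. -/
def sG {n : ℕ} (α : LVec n) (hα : B α α = 1) : Gamma n := ⟨srefl α hα, srefl_mem α hα⟩

open Fin.NatCast in
/-- The long simple roots `α₀ = e₀ - e₁ - e₂ - e₃` and `αᵢ = eᵢ - eᵢ₊₁` for `1 ≤ i ≤ n-1`. -/
def longRoot (n : ℕ) (i : ℕ) : LVec n :=
  if i = 0 then evec 0 - evec 1 - evec 2 - evec 3
  else evec (i : Fin (n + 1)) - evec ((i + 1 : ℕ) : Fin (n + 1))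

/-- The subgroup `Γ₀` of `Γ = O⁺(ℤ^{n,1})` generated by the reflections
`s_{α₀}, …, s_{α_{n-1}}` in the long simple roots. -/
def Gamma0 (n : ℕ) : Subgroup (Gamma n) :=
  Subgroup.closure { g | ∃ i : ℕ, i < n ∧
    ∀ v : LVec n, (g : (LVec n) ≃ₗ[ℤ] (LVec n)) v = v - (B v (longRoot n i)) • longRoot n i }

set_option maxRecDepth 40000



/-- The reflection `s_α(v) = v - ⟨v,α⟩α` in a norm two root `α`, as a linear map. -/
def reflMap2 {n : ℕ} (α : LVec n) : LVec n →ₗ[ℤ] LVec n where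
  toFun v := v - (B v α) • α
  map_add' x y := by
    show (x + y) - (B (x + y) α) • α = (x - (B x α) • α) + (y - (B y α) • α)
    rw [B_add_left, add_smul]; abel
  map_smul' c x := by
    show (c • x) - (B (c • x) α) • α = c • (x - (B x α) • α)
    rw [B_smul_left, smul_sub, smul_smul]

lemma reflMap2_apply {n : ℕ} (α : LVec n) (v : LVec n) :
    reflMap2 α v = v - (B v α) • α := rfl

lemma reflMap2_invol {n : ℕ} (α : LVec n) (hα : B α α = 2) (v : LVec n) :
    reflMap2 α (reflMap2 α v) = v := by
  rw [reflMap2_apply, reflMap2_apply, B_sub_left, B_smul_left, hα,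
    show B v α - B v α * 2 = -(B v α) by ring, neg_smul]
  abel

def srefl2 {n : ℕ} (α : LVec n) (hα : B α α = 2) : (LVec n) ≃ₗ[ℤ] (LVec n) :=
  LinearEquiv.ofLinear (reflMap2 α) (reflMap2 α)
    (LinearMap.ext fun v => reflMap2_invol α hα v)
    (LinearMap.ext fun v => reflMap2_invol α hα v)

lemma srefl2_apply {n : ℕ} (α : LVec n) (hα : B α α = 2) (v : LVec n) :
    srefl2 α hα v = v - (B v α) • α := rfl

lemma srefl2_form {n : ℕ} (α : LVec n) (hα : B α α = 2) (x y : LVec n) :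
    B (srefl2 α hα x) (srefl2 α hα y) = B x y := by
  rw [srefl2_apply, srefl2_apply, B_sub_left, B_sub_right, B_sub_right,
    B_smul_left, B_smul_right, B_smul_right, B_smul_left, hα, B_comm y α]
  ring

lemma srefl2_mem {n : ℕ} (α : LVec n) (hα : B α α = 2) : srefl2 α hα ∈ Gamma n := by
  refine ⟨srefl2_form α hα, ?_⟩
  rw [srefl2_apply, B_sub_left, B_smul_left, B_evec_zero_self, B_comm]
  nlinarith [sq_nonneg (B α (evec (0 : Fin (n+1))))]

/-- The reflection in a norm two root, as an element of `Γ`. -/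
def sG2 {n : ℕ} (α : LVec n) (hα : B α α = 2) : Gamma n := ⟨srefl2 α hα, srefl2_mem α hα⟩



/-- The norm `-1` vector orthogonal to all the long simple roots (for `n = 8`). -/
def wv : LVec 8 := fun i => if i = 0 then -3 else 1

lemma B_wv_wv : B wv wv = -1 := by decide

lemma B_root_wv : ∀ i : Fin 8, B (longRoot 8 i.1) wv = 0 := by decide

lemma B_root_self : ∀ i : Fin 8, B (longRoot 8 i.1) (longRoot 8 i.1) = 2 := by decide



lemma perp_sum_eq {x : LVec 8} (hx : B x wv = 0) :
    ∑ i ∈ Finset.univ.erase (0 : Fin 9), x i = -3 * x 0 := by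
  have h := B_eq x wv
  rw [hx] at h
  have h0 : wv 0 = -3 := rfl
  have hsum : ∑ i ∈ Finset.univ.erase (0 : Fin 9), x i * wv i
      = ∑ i ∈ Finset.univ.erase (0 : Fin 9), x i := by
    refine Finset.sum_congr rfl fun i hi => ?_
    have : wv i = 1 := by
      simp only [wv, if_neg (Finset.ne_of_mem_erase hi)]
    rw [this, mul_one]
  rw [h0, hsum] at h
  linarith

lemma perp_CS_aux (x : LVec 8) :
    (∑ i ∈ Finset.univ.erase (0 : Fin 9), x i) ^ 2
      ≤ 8 * ∑ i ∈ Finset.univ.erase (0 : Fin 9), x i * x i := by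
  have := Finset.sum_mul_sq_le_sq_mul_sq (Finset.univ.erase (0 : Fin 9))
    (fun _ => (1 : ℤ)) x
  have hcard : ∑ _i ∈ Finset.univ.erase (0 : Fin 9), (1 : ℤ) = 8 := by decide
  simpa [sq, hcard] using this

lemma perp_nonneg {x : LVec 8} (hx : B x wv = 0) : 0 ≤ B x x := by
  have h := B_eq x x
  have hs := perp_sum_eq hx
  have hcs := perp_CS_aux x
  have hnn : 0 ≤ ∑ i ∈ Finset.univ.erase (0 : Fin 9), x i * x i :=
    Finset.sum_nonneg fun i _ => mul_self_nonneg _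
  rw [hs] at hcs
  nlinarith

lemma perp_eq_zero {x : LVec 8} (hx : B x wv = 0) (h0 : B x x = 0) : x = 0 := by
  have h := B_eq x x
  have hs := perp_sum_eq hx
  have hcs := perp_CS_aux x
  have hnn : 0 ≤ ∑ i ∈ Finset.univ.erase (0 : Fin 9), x i * x i :=
    Finset.sum_nonneg fun i _ => mul_self_nonneg _
  rw [hs] at hcs
  have hx0 : x 0 = 0 := by nlinarith
  have hS : ∑ i ∈ Finset.univ.erase (0 : Fin 9), x i * x i = 0 := by nlinarith
  have hall := (Finset.sum_eq_zero_iff_of_nonneg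
    (fun i _ => mul_self_nonneg (x i))).mp hS
  funext i
  by_cases hi : i = 0
  · rw [hi]; exact hx0
  · have := hall i (Finset.mem_erase.mpr ⟨hi, Finset.mem_univ i⟩)
    have : x i = 0 := by nlinarith [this]
    exact this

lemma perp_even {x : LVec 8} (hx : B x wv = 0) : 2 ∣ B x x := by
  have h := B_eq x x
  have hs := perp_sum_eq hx
  have hpar : 2 ∣ (∑ i ∈ Finset.univ.erase (0 : Fin 9), x i * x i)
      - (∑ i ∈ Finset.univ.erase (0 : Fin 9), x i) := by
    rw [← Finset.sum_sub_distrib]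
    refine Finset.dvd_sum fun i _ => ?_
    have := Int.even_mul_succ_self (x i - 1)
    rcases this with ⟨k, hk⟩
    exact ⟨k, by nlinarith⟩
  have hpar0 : 2 ∣ x 0 * x 0 + x 0 := by
    rcases Int.even_mul_succ_self (x 0) with ⟨k, hk⟩
    exact ⟨k, by linarith⟩
  rcases hpar with ⟨a, ha⟩
  rcases hpar0 with ⟨b, hb⟩
  exact ⟨a - b - x 0, by linarith⟩

lemma perp_CS {x y : LVec 8} (hx : B x wv = 0) (hy : B y wv = 0) :
    (B x y) ^ 2 ≤ B x x * B y y := by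
  rcases eq_or_lt_of_le (perp_nonneg hx) with h0 | hpos
  · have hx0 : x = 0 := perp_eq_zero hx h0.symm
    have : B x y = 0 := by
      rw [hx0, show (0 : LVec 8) = (0 : ℤ) • (0 : LVec 8) by simp, B_smul_left]
      ring
    rw [this, ← h0]
    simp
  · set z := (B x x) • y - (B x y) • x with hz
    have hzw : B z wv = 0 := by
      rw [hz, B_sub_left, B_smul_left, B_smul_left, hx, hy]; ring
    have hzz := perp_nonneg hzw
    simp only [hz, B_sub_left, B_sub_right, B_smul_left, B_smul_right] at hzz
    rw [B_comm y x] at hzz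
    by_contra hcon
    push_neg at hcon
    have hneg : B x x * (B x x * B y y - B x y * B x y) < 0 :=
      mul_neg_of_pos_of_neg hpos (by nlinarith)
    nlinarith



lemma root_rigid {α β : LVec 8} (hα2 : B α α = 2) (hαw : B α wv = 0)
    (hβ2 : B β β = 2) (hβw : B β wv = 0) (hcong : ∀ i, (2 : ℤ) ∣ (β i - α i)) :
    β = α ∨ β = -α := by
  set u : LVec 8 := fun i => (β i - α i) / 2 with hu
  have hβu : β = α + (2 : ℤ) • u := by
    funext i
    have := Int.ediv_mul_cancel (hcong i)
    simp only [Pi.add_apply, Pi.smul_apply, smul_eq_mul, hu]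
    omega
  have huw : B u wv = 0 := by
    have : B β wv = B α wv + 2 * B u wv := by
      rw [hβu, B_add_left, B_smul_left]
    rw [hβw, hαw] at this
    linarith
  have hαu : B α u = -(B u u) := by
    have : B β β = B α α + 2 * B α u + 2 * B u α + 2 * (2 * B u u) := by
      rw [hβu, B_add_left, B_add_right, B_add_right, B_smul_left, B_smul_right,
        B_smul_right, B_smul_left]
      ring
    rw [hβ2, hα2, B_comm u α] at this
    linarith
  have hunn := perp_nonneg huw
  have huev := perp_even huw
  have hcs := perp_CS hαw huw
  rw [hα2, hαu] at hcs
  have ha : B u u = 0 ∨ B u u = 2 := by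
    rcases huev with ⟨k, hk⟩
    have hk0 : 0 ≤ k := by linarith
    have hk1 : k ≤ 1 := by nlinarith
    have : k = 0 ∨ k = 1 := by omega
    rcases this with h | h <;> [left; right] <;> rw [hk, h] <;> ring
  rcases ha with ha | ha
  · left
    have : u = 0 := perp_eq_zero huw ha
    rw [hβu, this]
    funext i; simp
  · right
    have hau : B α u = -2 := by rw [hαu, ha]
    have htw : B (α + u) wv = 0 := by rw [B_add_left, hαw, huw]; ring
    have htt : B (α + u) (α + u) = 0 := by
      rw [B_add_left, B_add_right, B_add_right, hα2, hau, B_comm u α, hau, ha]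
      ring
    have ht0 : α + u = 0 := perp_eq_zero htw htt
    have huα : u = -α := by
      funext i
      have := congrFun ht0 i
      simp only [Pi.add_apply, Pi.zero_apply] at this
      simp only [Pi.neg_apply]
      linarith
    rw [hβu, huα]
    funext i
    simp only [Pi.add_apply, Pi.smul_apply, Pi.neg_apply, smul_eq_mul]
    ring
def rhoMap : LVec 8 →ₗ[ℤ] LVec 8 where
  toFun v := -v - (2 * B v wv) • wv
  map_add' x y := by
    show -(x + y) - (2 * B (x + y) wv) • wv = _
    rw [B_add_left, show (2:ℤ) * (B x wv + B y wv) = 2 * B x wv + 2 * B y wv by ring, add_smul]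
    abel
  map_smul' c x := by
    show -(c • x) - (2 * B (c • x) wv) • wv = c • (-x - (2 * B x wv) • wv)
    rw [B_smul_left, smul_sub, smul_smul,
      show (2:ℤ) * (c * B x wv) = c * (2 * B x wv) by ring, smul_neg]

lemma rhoMap_invol (v : LVec 8) : rhoMap (rhoMap v) = v := by
  show -(-v - (2 * B v wv) • wv) - (2 * B (-v - (2 * B v wv) • wv) wv) • wv = v
  rw [B_sub_left, B_neg_left, B_smul_left, B_wv_wv,
    show (2:ℤ) * (-B v wv - 2 * B v wv * -1) = 2 * B v wv by ring]
  abel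

def rhoE : LVec 8 ≃ₗ[ℤ] LVec 8 :=
  LinearEquiv.ofLinear rhoMap rhoMap
    (LinearMap.ext fun v => rhoMap_invol v) (LinearMap.ext fun v => rhoMap_invol v)

lemma rhoE_apply (v : LVec 8) : rhoE v = -v - (2 * B v wv) • wv := rfl

lemma B_neg_neg (p q : LVec 8) : B (-p) (-q) = B p q := by
  rw [B_neg_left, B_comm, B_neg_left, B_comm q p, neg_neg]

lemma rhoE_mem : rhoE ∈ Gamma 8 := by
  constructor
  · intro x y
    rw [rhoE_apply x, rhoE_apply y,
      show -x - (2 * B x wv) • wv = -(x + (2 * B x wv) • wv) by abel,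
      show -y - (2 * B y wv) • wv = -(y + (2 * B y wv) • wv) by abel,
      B_neg_neg, B_add_left, B_add_right, B_add_right, B_smul_left, B_smul_right,
      B_smul_right, B_smul_left, B_wv_wv, B_comm wv y]
    ring
  · show B (rhoE (evec 0)) (evec 0) < 0
    decide

def rhoG : Gamma 8 := ⟨rhoE, rhoE_mem⟩

lemma rhoE_wv : rhoE wv = wv := by decide

lemma rhoE_roots : ∀ i : Fin 8, rhoE (longRoot 8 i.1) = -(longRoot 8 i.1) := by decide

def gRef (i : Fin 8) : Gamma 8 := sG2 (longRoot 8 i.1) (B_root_self i)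

def cC : Gamma 8 :=
  gRef 0 * gRef 1 * gRef 2 * gRef 3 * gRef 4 * gRef 5 * gRef 6 * gRef 7

lemma c15_roots : ∀ i : Fin 8,
    ((cC ^ 15 : Gamma 8) : LVec 8 ≃ₗ[ℤ] LVec 8) (longRoot 8 i.1) = -(longRoot 8 i.1) := by
  decide
lemma vec_decomp (v : LVec 8) : v = ∑ j : Fin 9, v j • evec j := by
  funext i
  rw [Finset.sum_apply]
  simp [evec, Pi.single_apply]

lemma rigid {aE bE : LVec 8 ≃ₗ[ℤ] LVec 8} (hw : aE wv = bE wv)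
    (hr : ∀ i : Fin 8, aE (longRoot 8 i.1) = bE (longRoot 8 i.1)) : aE = bE := by
  have h0 : aE (longRoot 8 0) = bE (longRoot 8 0) := hr 0
  have h1 : aE (longRoot 8 1) = bE (longRoot 8 1) := hr 1
  have h2 : aE (longRoot 8 2) = bE (longRoot 8 2) := hr 2
  have h3 : aE (longRoot 8 3) = bE (longRoot 8 3) := hr 3
  have h4 : aE (longRoot 8 4) = bE (longRoot 8 4) := hr 4
  have h5 : aE (longRoot 8 5) = bE (longRoot 8 5) := hr 5
  have h6 : aE (longRoot 8 6) = bE (longRoot 8 6) := hr 6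
  have h7 : aE (longRoot 8 7) = bE (longRoot 8 7) := hr 7
  have key : ∀ j : Fin 9, aE (evec j) = bE (evec j) := by
    intro j
    fin_cases j
    · show aE (evec (0 : Fin 9)) = bE (evec (0 : Fin 9))
      rw [show evec (0 : Fin 9) = (-3 : ℤ) • wv + (-8 : ℤ) • longRoot 8 0
          + (-5 : ℤ) • longRoot 8 1 + (-10 : ℤ) • longRoot 8 2 + (-15 : ℤ) • longRoot 8 3
          + (-12 : ℤ) • longRoot 8 4 + (-9 : ℤ) • longRoot 8 5 + (-6 : ℤ) • longRoot 8 6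
          + (-3 : ℤ) • longRoot 8 7 from by decide]
      simp only [map_add, map_smul, hw, h0, h1, h2, h3, h4, h5, h6, h7]
    · show aE (evec (1 : Fin 9)) = bE (evec (1 : Fin 9))
      rw [show evec (1 : Fin 9) = (-1 : ℤ) • wv + (-3 : ℤ) • longRoot 8 0
          + (-1 : ℤ) • longRoot 8 1 + (-3 : ℤ) • longRoot 8 2 + (-5 : ℤ) • longRoot 8 3
          + (-4 : ℤ) • longRoot 8 4 + (-3 : ℤ) • longRoot 8 5 + (-2 : ℤ) • longRoot 8 6
          + (-1 : ℤ) • longRoot 8 7 from by decide]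
      simp only [map_add, map_smul, hw, h0, h1, h2, h3, h4, h5, h6, h7]
    · show aE (evec (2 : Fin 9)) = bE (evec (2 : Fin 9))
      rw [show evec (2 : Fin 9) = (-1 : ℤ) • wv + (-3 : ℤ) • longRoot 8 0
          + (-2 : ℤ) • longRoot 8 1 + (-3 : ℤ) • longRoot 8 2 + (-5 : ℤ) • longRoot 8 3
          + (-4 : ℤ) • longRoot 8 4 + (-3 : ℤ) • longRoot 8 5 + (-2 : ℤ) • longRoot 8 6
          + (-1 : ℤ) • longRoot 8 7 from by decide]
      simp only [map_add, map_smul, hw, h0, h1, h2, h3, h4, h5, h6, h7]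
    · show aE (evec (3 : Fin 9)) = bE (evec (3 : Fin 9))
      rw [show evec (3 : Fin 9) = (-1 : ℤ) • wv + (-3 : ℤ) • longRoot 8 0
          + (-2 : ℤ) • longRoot 8 1 + (-4 : ℤ) • longRoot 8 2 + (-5 : ℤ) • longRoot 8 3
          + (-4 : ℤ) • longRoot 8 4 + (-3 : ℤ) • longRoot 8 5 + (-2 : ℤ) • longRoot 8 6
          + (-1 : ℤ) • longRoot 8 7 from by decide]
      simp only [map_add, map_smul, hw, h0, h1, h2, h3, h4, h5, h6, h7]
    · show aE (evec (4 : Fin 9)) = bE (evec (4 : Fin 9))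
      rw [show evec (4 : Fin 9) = (-1 : ℤ) • wv + (-3 : ℤ) • longRoot 8 0
          + (-2 : ℤ) • longRoot 8 1 + (-4 : ℤ) • longRoot 8 2 + (-6 : ℤ) • longRoot 8 3
          + (-4 : ℤ) • longRoot 8 4 + (-3 : ℤ) • longRoot 8 5 + (-2 : ℤ) • longRoot 8 6
          + (-1 : ℤ) • longRoot 8 7 from by decide]
      simp only [map_add, map_smul, hw, h0, h1, h2, h3, h4, h5, h6, h7]
    · show aE (evec (5 : Fin 9)) = bE (evec (5 : Fin 9))
      rw [show evec (5 : Fin 9) = (-1 : ℤ) • wv + (-3 : ℤ) • longRoot 8 0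
          + (-2 : ℤ) • longRoot 8 1 + (-4 : ℤ) • longRoot 8 2 + (-6 : ℤ) • longRoot 8 3
          + (-5 : ℤ) • longRoot 8 4 + (-3 : ℤ) • longRoot 8 5 + (-2 : ℤ) • longRoot 8 6
          + (-1 : ℤ) • longRoot 8 7 from by decide]
      simp only [map_add, map_smul, hw, h0, h1, h2, h3, h4, h5, h6, h7]
    · show aE (evec (6 : Fin 9)) = bE (evec (6 : Fin 9))
      rw [show evec (6 : Fin 9) = (-1 : ℤ) • wv + (-3 : ℤ) • longRoot 8 0
          + (-2 : ℤ) • longRoot 8 1 + (-4 : ℤ) • longRoot 8 2 + (-6 : ℤ) • longRoot 8 3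
          + (-5 : ℤ) • longRoot 8 4 + (-4 : ℤ) • longRoot 8 5 + (-2 : ℤ) • longRoot 8 6
          + (-1 : ℤ) • longRoot 8 7 from by decide]
      simp only [map_add, map_smul, hw, h0, h1, h2, h3, h4, h5, h6, h7]
    · show aE (evec (7 : Fin 9)) = bE (evec (7 : Fin 9))
      rw [show evec (7 : Fin 9) = (-1 : ℤ) • wv + (-3 : ℤ) • longRoot 8 0
          + (-2 : ℤ) • longRoot 8 1 + (-4 : ℤ) • longRoot 8 2 + (-6 : ℤ) • longRoot 8 3
          + (-5 : ℤ) • longRoot 8 4 + (-4 : ℤ) • longRoot 8 5 + (-3 : ℤ) • longRoot 8 6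
          + (-1 : ℤ) • longRoot 8 7 from by decide]
      simp only [map_add, map_smul, hw, h0, h1, h2, h3, h4, h5, h6, h7]
    · show aE (evec (8 : Fin 9)) = bE (evec (8 : Fin 9))
      rw [show evec (8 : Fin 9) = (-1 : ℤ) • wv + (-3 : ℤ) • longRoot 8 0
          + (-2 : ℤ) • longRoot 8 1 + (-4 : ℤ) • longRoot 8 2 + (-6 : ℤ) • longRoot 8 3
          + (-5 : ℤ) • longRoot 8 4 + (-4 : ℤ) • longRoot 8 5 + (-3 : ℤ) • longRoot 8 6
          + (-2 : ℤ) • longRoot 8 7 from by decide]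
      simp only [map_add, map_smul, hw, h0, h1, h2, h3, h4, h5, h6, h7]
  apply LinearEquiv.toLinearMap_injective
  apply LinearMap.ext
  intro v
  show aE v = bE v
  rw [vec_decomp v, map_sum, map_sum]
  exact Finset.sum_congr rfl fun j _ => by rw [map_smul, map_smul, key j]

lemma Gamma0_fix {g : Gamma 8} (hg : g ∈ Gamma0 8) :
    (g : LVec 8 ≃ₗ[ℤ] LVec 8) wv = wv := by
  induction hg using Subgroup.closure_induction with
  | mem x hx =>
      obtain ⟨i, hi, hf⟩ := hx
      rw [hf wv]
      have hb : B wv (longRoot 8 i) = 0 := by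
        rw [B_comm]; exact B_root_wv ⟨i, hi⟩
      rw [hb, zero_smul, sub_zero]
  | one => rfl
  | mul a b _ _ pa pb =>
      show (a : LVec 8 ≃ₗ[ℤ] LVec 8) ((b : LVec 8 ≃ₗ[ℤ] LVec 8) wv) = wv
      rw [pb, pa]
  | inv a _ pa =>
      have : (a : LVec 8 ≃ₗ[ℤ] LVec 8).symm ((a : LVec 8 ≃ₗ[ℤ] LVec 8) wv) = wv :=
        (a : LVec 8 ≃ₗ[ℤ] LVec 8).symm_apply_apply wv
      rw [pa] at this
      exact this
lemma signPropP {gE : LVec 8 ≃ₗ[ℤ] LVec 8} (hform : ∀ x y, B (gE x) (gE y) = B x y)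
    {x y : LVec 8} (hxy : B x y = -1) (hx : gE x = x)
    (hy : gE y = y ∨ gE y = -y) : gE y = y := by
  rcases hy with h | h
  · exact h
  · exfalso
    have h2 := hform x y
    rw [hx, h, B_comm x (-y), B_neg_left, B_comm y x, hxy] at h2
    norm_num at h2

lemma signPropN {gE : LVec 8 ≃ₗ[ℤ] LVec 8} (hform : ∀ x y, B (gE x) (gE y) = B x y)
    {x y : LVec 8} (hxy : B x y = -1) (hx : gE x = -x)
    (hy : gE y = y ∨ gE y = -y) : gE y = -y := by
  rcases hy with h | h
  · exfalso
    have h2 := hform x y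
    rw [hx, h, B_neg_left, hxy] at h2
    norm_num at h2
  · exact h

lemma rhoG_mem_cong : rhoG ∈ GammaCong 8 2 := by
  intro v i
  show (2 : ℤ) ∣ (rhoE v i - v i)
  have hco : rhoE v i = -(v i) - (2 * B v wv) * wv i := by
    rw [rhoE_apply]
    simp [Pi.sub_apply, Pi.neg_apply, Pi.smul_apply, smul_eq_mul]
  rw [hco]
  exact ⟨-(v i) - B v wv * wv i, by ring⟩

lemma rhoG_ne_one : rhoG ≠ 1 := by
  intro h
  have h2 : rhoE (evec 1) = evec 1 :=
    congrArg (fun g : Gamma 8 => (g : LVec 8 ≃ₗ[ℤ] LVec 8) (evec 1)) h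
  exact absurd h2 (by decide)

lemma gRef_mem (i : Fin 8) : gRef i ∈ Gamma0 8 :=
  Subgroup.subset_closure ⟨i.1, i.2, fun _ => rfl⟩

lemma cC_mem : cC ∈ Gamma0 8 := by
  refine mul_mem (mul_mem (mul_mem (mul_mem (mul_mem (mul_mem (mul_mem
    (gRef_mem 0) (gRef_mem 1)) (gRef_mem 2)) (gRef_mem 3)) (gRef_mem 4))
    (gRef_mem 5)) (gRef_mem 6)) (gRef_mem 7)

lemma c15_mem : cC ^ 15 ∈ Gamma0 8 := pow_mem cC_mem 15

lemma rho_eq_c15 : rhoG = cC ^ 15 := by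
  apply Subtype.ext
  apply rigid
  · show rhoE wv = _
    rw [rhoE_wv, Gamma0_fix c15_mem]
  · intro i
    show rhoE (longRoot 8 i.1) = _
    rw [rhoE_roots i, c15_roots i]

lemma rhoG_mem_Gamma0 : rhoG ∈ Gamma0 8 := rho_eq_c15 ▸ c15_mem

lemma classify {g : Gamma 8} (hg0 : g ∈ Gamma0 8) (hg2 : g ∈ GammaCong 8 2) :
    g = 1 ∨ g = rhoG := by
  have hform : ∀ x y, B ((g : LVec 8 ≃ₗ[ℤ] LVec 8) x) ((g : LVec 8 ≃ₗ[ℤ] LVec 8) y) = B x y :=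
    g.2.1
  have hw : (g : LVec 8 ≃ₗ[ℤ] LVec 8) wv = wv := Gamma0_fix hg0
  have hroot : ∀ i : Fin 8, (g : LVec 8 ≃ₗ[ℤ] LVec 8) (longRoot 8 i.1) = longRoot 8 i.1 ∨
      (g : LVec 8 ≃ₗ[ℤ] LVec 8) (longRoot 8 i.1) = -(longRoot 8 i.1) := by
    intro i
    refine root_rigid (B_root_self i) (B_root_wv i) ?_ ?_ ?_
    · rw [hform]; exact B_root_self i
    · calc B ((g : LVec 8 ≃ₗ[ℤ] LVec 8) (longRoot 8 i.1)) wv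
          = B ((g : LVec 8 ≃ₗ[ℤ] LVec 8) (longRoot 8 i.1)) ((g : LVec 8 ≃ₗ[ℤ] LVec 8) wv) := by
            rw [hw]
        _ = B (longRoot 8 i.1) wv := hform _ _
        _ = 0 := B_root_wv i
    · intro j
      exact hg2 (longRoot 8 i.1) j
  have hB12 : B (longRoot 8 1) (longRoot 8 2) = -1 := by decide
  have hB23 : B (longRoot 8 2) (longRoot 8 3) = -1 := by decide
  have hB34 : B (longRoot 8 3) (longRoot 8 4) = -1 := by decide
  have hB45 : B (longRoot 8 4) (longRoot 8 5) = -1 := by decide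
  have hB56 : B (longRoot 8 5) (longRoot 8 6) = -1 := by decide
  have hB67 : B (longRoot 8 6) (longRoot 8 7) = -1 := by decide
  have hB30 : B (longRoot 8 3) (longRoot 8 0) = -1 := by decide
  have hr0 := hroot 0
  have hr1 := hroot 1
  have hr2 := hroot 2
  have hr3 := hroot 3
  have hr4 := hroot 4
  have hr5 := hroot 5
  have hr6 := hroot 6
  have hr7 := hroot 7
  rcases hr1 with h1 | h1
  · left
    have h2 := signPropP hform hB12 h1 hr2
    have h3 := signPropP hform hB23 h2 hr3
    have h4 := signPropP hform hB34 h3 hr4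
    have h5 := signPropP hform hB45 h4 hr5
    have h6 := signPropP hform hB56 h5 hr6
    have h7 := signPropP hform hB67 h6 hr7
    have h0 := signPropP hform hB30 h3 hr0
    apply Subtype.ext
    apply rigid (bE := LinearEquiv.refl ℤ (LVec 8))
    · rw [hw]; rfl
    · intro i
      fin_cases i <;> simp only [LinearEquiv.refl_apply] <;> assumption
  · right
    have h2 := signPropN hform hB12 h1 hr2
    have h3 := signPropN hform hB23 h2 hr3
    have h4 := signPropN hform hB34 h3 hr4
    have h5 := signPropN hform hB45 h4 hr5
    have h6 := signPropN hform hB56 h5 hr6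
    have h7 := signPropN hform hB67 h6 hr7
    have h0 := signPropN hform hB30 h3 hr0
    apply Subtype.ext
    apply rigid (bE := rhoE)
    · rw [hw, rhoE_wv]
    · intro i
      rw [rhoE_roots i]
      fin_cases i <;> assumption

/-- For `n = 8` the group `Γ₀` of type `E₈` generated by the reflections in the long
simple roots meets the principal congruence subgroup `Γ(2)` in a subgroup of order
exactly `2`. -/
theorem gamma0_inf_gammaCong_two_card_eq_two :
    Nat.card (Gamma0 8 ⊓ GammaCong 8 2 : Subgroup (Gamma 8)) = 2 := by
  have hmem1 : (1 : Gamma 8) ∈ Gamma0 8 ⊓ GammaCong 8 2 := one_mem _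
  have hmemr : rhoG ∈ Gamma0 8 ⊓ GammaCong 8 2 :=
    Subgroup.mem_inf.mpr ⟨rhoG_mem_Gamma0, rhoG_mem_cong⟩
  rw [Nat.card_eq_two_iff]
  refine ⟨⟨1, hmem1⟩, ⟨rhoG, hmemr⟩, ?_, ?_⟩
  · intro h
    exact rhoG_ne_one (congrArg Subtype.val h).symm
  · rw [Set.eq_univ_iff_forall]
    intro z
    obtain ⟨hz0, hz2⟩ := Subgroup.mem_inf.mp z.2
    rcases classify hz0 hz2 with h | h
    · exact Set.mem_insert_iff.mpr (Or.inl (Subtype.ext h))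
    · exact Set.mem_insert_iff.mpr (Or.inr (Set.mem_singleton_iff.mpr (Subtype.ext h)))
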